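/- Let A : X → Y and B, C : Y → X satisfy A(BA)² = ABACA = ACABA = (AC)²A. Then AC − I has finite ascent if and only if BA − I has finite ascent, and in that case their ascents are equal. -/

import Mathlib

open Polynomial ContinuousLinearMap

section Aux

variable {X Y : Type*} [NormedAddCommGroup X] [NormedSpace ℂ X]
  [NormedAddCommGroup Y] [NormedSpace ℂ Y]

lemma ker_pow_mono (T : Y →L[ℂ] Y) (n : ℕ) :
    LinearMap.ker ((T ^ n : Y →L[ℂ] Y) : Y →ₗ[ℂ] Y) ≤ LinearMap.ker ((T ^ (n + 1) : Y →L[ℂ] Y) : Y →ₗ[ℂ] Y) := by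
  intro x hx
  rw [LinearMap.mem_ker, ContinuousLinearMap.coe_coe] at hx ⊢
  rw [pow_succ', ContinuousLinearMap.mul_apply, hx, map_zero]

lemma ker_pow_step (T : Y →L[ℂ] Y) (n : ℕ)
    (h : LinearMap.ker ((T ^ n : Y →L[ℂ] Y) : Y →ₗ[ℂ] Y) = LinearMap.ker ((T ^ (n + 1) : Y →L[ℂ] Y) : Y →ₗ[ℂ] Y)) :
    LinearMap.ker ((T ^ (n + 1) : Y →L[ℂ] Y) : Y →ₗ[ℂ] Y) = LinearMap.ker ((T ^ (n + 2) : Y →L[ℂ] Y) : Y →ₗ[ℂ] Y) := by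
  refine le_antisymm (ker_pow_mono T (n + 1)) ?_
  intro x hx
  rw [LinearMap.mem_ker, ContinuousLinearMap.coe_coe] at hx ⊢
  have hTx : T x ∈ LinearMap.ker ((T ^ (n + 1) : Y →L[ℂ] Y) : Y →ₗ[ℂ] Y) := by
    rw [LinearMap.mem_ker, ContinuousLinearMap.coe_coe]
    have : (T ^ (n + 1) * T) x = 0 := by rw [← pow_succ]; exact hx
    simpa [ContinuousLinearMap.mul_apply] using this
  rw [← h, LinearMap.mem_ker, ContinuousLinearMap.coe_coe] at hTx
  rw [pow_succ, ContinuousLinearMap.mul_apply]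
  exact hTx

lemma intertwine (U : X →L[ℂ] Y) (V : Y →L[ℂ] X) (n : ℕ) :
    U ∘L ((V ∘L U - 1) ^ n) = ((U ∘L V - 1) ^ n) ∘L U := by
  induction n with
  | zero => simp [ContinuousLinearMap.one_def]
  | succ n ih =>
    rw [pow_succ', pow_succ', mul_def, mul_def, ← ContinuousLinearMap.comp_assoc]
    have h1 : U ∘L (V ∘L U - 1) = (U ∘L V - 1) ∘L U := by
      ext x; simp
    rw [h1, ContinuousLinearMap.comp_assoc, ih, ← ContinuousLinearMap.comp_assoc]

lemma jacobson_ker (U : X →L[ℂ] Y) (V : Y →L[ℂ] X) (n : ℕ)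
    (h : LinearMap.ker ((((U ∘L V - 1) ^ n : Y →L[ℂ] Y) : Y →ₗ[ℂ] Y)) = LinearMap.ker ((((U ∘L V - 1) ^ (n + 1) : Y →L[ℂ] Y) : Y →ₗ[ℂ] Y))) :
    LinearMap.ker ((((V ∘L U - 1) ^ n : X →L[ℂ] X) : X →ₗ[ℂ] X)) = LinearMap.ker ((((V ∘L U - 1) ^ (n + 1) : X →L[ℂ] X) : X →ₗ[ℂ] X)) := by
  refine le_antisymm (ker_pow_mono _ n) ?_
  intro x hx
  rw [LinearMap.mem_ker, ContinuousLinearMap.coe_coe] at hx ⊢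
  have hUx : U x ∈ LinearMap.ker ((((U ∘L V - 1) ^ (n + 1) : Y →L[ℂ] Y) : Y →ₗ[ℂ] Y)) := by
    rw [LinearMap.mem_ker, ContinuousLinearMap.coe_coe]
    have := DFunLike.congr_fun (intertwine U V (n + 1)) x
    simp only [comp_apply] at this
    rw [← this, hx, map_zero]
  rw [← h, LinearMap.mem_ker, ContinuousLinearMap.coe_coe] at hUx
  have hz : U (((V ∘L U - 1) ^ n) x) = 0 := by
    have := DFunLike.congr_fun (intertwine U V n) x
    simp only [comp_apply] at this
    rw [this, hUx]
  have hSz : (V ∘L U - 1) (((V ∘L U - 1) ^ n) x) = 0 := by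
    rw [← ContinuousLinearMap.mul_apply, ← pow_succ']
    exact hx
  simp only [sub_apply, comp_apply, ContinuousLinearMap.one_apply, sub_eq_zero] at hSz
  rw [show ((V ∘L U - 1) ^ n) x = V (U (((V ∘L U - 1) ^ n) x)) from hSz.symm, hz, map_zero]

end Aux

section Core

variable {X Y : Type*} [NormedAddCommGroup X] [NormedSpace ℂ X]
  [NormedAddCommGroup Y] [NormedSpace ℂ Y]

lemma core (A : X →L[ℂ] Y) (B C : Y →L[ℂ] X)
    (h1 : A ∘L B ∘L A ∘L B ∘L A = A ∘L B ∘L A ∘L C ∘L A)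
    (h2 : A ∘L B ∘L A ∘L C ∘L A = A ∘L C ∘L A ∘L B ∘L A)
    (h3 : A ∘L C ∘L A ∘L B ∘L A = A ∘L C ∘L A ∘L C ∘L A) (n : ℕ)
    (hker : LinearMap.ker ((((A ∘L C - 1) ^ n : Y →L[ℂ] Y) : Y →ₗ[ℂ] Y)) = LinearMap.ker ((((A ∘L C - 1) ^ (n + 1) : Y →L[ℂ] Y) : Y →ₗ[ℂ] Y))) :
    LinearMap.ker ((((B ∘L A - 1) ^ n : X →L[ℂ] X) : X →ₗ[ℂ] X)) = LinearMap.ker ((((B ∘L A - 1) ^ (n + 1) : X →L[ℂ] X) : X →ₗ[ℂ] X)) := by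
  set T : Y →L[ℂ] Y := A ∘L C - 1 with hT
  set S : X →L[ℂ] X := B ∘L A - 1 with hS
  -- pointwise versions of the hypotheses
  have e1 : ∀ x : X, A (B (A (B (A x)))) = A (B (A (C (A x)))) := fun x => by
    simpa using DFunLike.congr_fun h1 x
  have e2 : ∀ x : X, A (B (A (C (A x)))) = A (C (A (B (A x)))) := fun x => by
    simpa using DFunLike.congr_fun h2 x
  have e3 : ∀ x : X, A (C (A (B (A x)))) = A (C (A (C (A x)))) := fun x => by
    simpa using DFunLike.congr_fun h3 x
  -- D = ABA - ACA, pointwise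
  have hTD : ∀ x : X, T (A (B (A x)) - A (C (A x))) = -(A (B (A x)) - A (C (A x))) := by
    intro x
    simp only [hT, sub_apply, comp_apply, ContinuousLinearMap.one_apply, map_sub, e3 x]
    abel
  have hDS : ∀ x : X, (A (B (A (S x))) - A (C (A (S x)))) = -(A (B (A x)) - A (C (A x))) := by
    intro x
    simp only [hS, sub_apply, comp_apply, ContinuousLinearMap.one_apply, map_sub, e1 x, e2 x]
    abel
  have hTM : ∀ x : X, T (A (C (A x))) = A (C (A (S x))) := by
    intro x
    simp only [hT, hS, sub_apply, comp_apply, ContinuousLinearMap.one_apply, map_sub, e3 x]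
  have hAS : ∀ x : X, A (S x) = T (A x) + (A (B (A x)) - A (C (A x))) := by
    intro x
    simp only [hT, hS, sub_apply, comp_apply, ContinuousLinearMap.one_apply, map_sub]
    abel
  -- iterated versions
  have hDSn : ∀ (m : ℕ) (x : X),
      (A (B (A ((S ^ m) x))) - A (C (A ((S ^ m) x)))) =
        ((-1 : ℂ) ^ m) • (A (B (A x)) - A (C (A x))) := by
    intro m
    induction m with
    | zero => intro x; simp
    | succ m ih =>
      intro x
      have hs : (S ^ (m + 1)) x = (S ^ m) (S x) := by
        rw [pow_succ, ContinuousLinearMap.mul_apply]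
      rw [hs, ih (S x), hDS x, pow_succ]
      rw [smul_neg, mul_comm, mul_smul]
      simp
  have hTMn : ∀ (m : ℕ) (x : X), (T ^ m) (A (C (A x))) = A (C (A ((S ^ m) x))) := by
    intro m
    induction m with
    | zero => intro x; simp
    | succ m ih =>
      intro x
      have ht : (T ^ (m + 1)) (A (C (A x))) = (T ^ m) (T (A (C (A x)))) := by
        rw [pow_succ, ContinuousLinearMap.mul_apply]
      rw [ht, hTM x, ih (S x), ← ContinuousLinearMap.mul_apply, ← pow_succ]
  have hMain : ∀ m : ℕ, ∃ c : ℂ, ∀ x : X,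
      A ((S ^ m) x) = (T ^ m) (A x) + c • (A (B (A x)) - A (C (A x))) := by
    intro m
    induction m with
    | zero => exact ⟨0, fun x => by simp⟩
    | succ m ih =>
      obtain ⟨c, hc⟩ := ih
      refine ⟨(-1 : ℂ) ^ m - c, fun x => ?_⟩
      have hs : (S ^ (m + 1)) x = S ((S ^ m) x) := by
        rw [pow_succ', ContinuousLinearMap.mul_apply]
      rw [hs, hAS ((S ^ m) x), hDSn m x, hc x]
      rw [map_add, map_smul, hTD x]
      have ht : T ((T ^ m) (A x)) = (T ^ (m + 1)) (A x) := by
        rw [pow_succ', ContinuousLinearMap.mul_apply]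
      rw [ht, smul_neg, sub_smul]
      abel
  -- main argument
  refine le_antisymm (ker_pow_mono _ n) ?_
  intro x hx
  rw [LinearMap.mem_ker, ContinuousLinearMap.coe_coe] at hx ⊢
  obtain ⟨c, hc⟩ := hMain (n + 1)
  have h4 : (T ^ (n + 1)) (A x) = -(c • (A (B (A x)) - A (C (A x)))) := by
    have h := hc x
    rw [hx, map_zero] at h
    exact eq_neg_of_add_eq_zero_left h.symm
  have h5 : (T ^ (n + 2)) (A x) = c • (A (B (A x)) - A (C (A x))) := by
    have ht : (T ^ (n + 2)) (A x) = T ((T ^ (n + 1)) (A x)) := by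
      rw [pow_succ', ContinuousLinearMap.mul_apply]
    rw [ht, h4, map_neg, map_smul, hTD x, smul_neg, neg_neg]
  have h6 : (T ^ (n + 1)) (T (A x) + A x) = 0 := by
    rw [map_add]
    have h7 : (T ^ (n + 1)) (T (A x)) = (T ^ (n + 2)) (A x) := by
      rw [← ContinuousLinearMap.mul_apply, ← pow_succ]
    rw [h7, h5, h4]
    simp
  have hw : T (A x) + A x = A (C (A x)) := by
    simp only [hT, sub_apply, comp_apply, ContinuousLinearMap.one_apply]
    abel
  rw [hw] at h6
  have h9 : (T ^ n) (A (C (A x))) = 0 := by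
    have : A (C (A x)) ∈ LinearMap.ker ((((A ∘L C - 1) ^ (n + 1) : Y →L[ℂ] Y) : Y →ₗ[ℂ] Y)) := by
      rw [LinearMap.mem_ker, ContinuousLinearMap.coe_coe]; exact h6
    rw [← hker, LinearMap.mem_ker, ContinuousLinearMap.coe_coe] at this
    exact this
  rw [hTMn n x] at h9
  set z := (S ^ n) x with hzdef
  have hz2 : S z = 0 := by
    rw [hzdef, ← ContinuousLinearMap.mul_apply, ← pow_succ']
    exact hx
  have hb : B (A z) = z := by
    have h := hz2
    simp only [hS, sub_apply, comp_apply, ContinuousLinearMap.one_apply, sub_eq_zero] at h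
    exact h
  have hAz : A z = 0 := by
    have hrepl : A z = A (B (A (B (A z)))) := by rw [hb, hb]
    rw [hrepl, e1 z, h9, map_zero, map_zero]
  rw [← hb, hAz, map_zero]

end Core

variable {X Y : Type*} [NormedAddCommGroup X] [NormedSpace ℂ X] [CompleteSpace X]
  [NormedAddCommGroup Y] [NormedSpace ℂ Y] [CompleteSpace Y]
theorem stmt8 (A : X →L[ℂ] Y) (B C : Y →L[ℂ] X)
    (h1 : A ∘L B ∘L A ∘L B ∘L A = A ∘L B ∘L A ∘L C ∘L A)
    (h2 : A ∘L B ∘L A ∘L C ∘L A = A ∘L C ∘L A ∘L B ∘L A)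
    (h3 : A ∘L C ∘L A ∘L B ∘L A = A ∘L C ∘L A ∘L C ∘L A) :
    ((∃ n : ℕ, LinearMap.ker ((((A ∘L C - 1) ^ n : Y →L[ℂ] Y) : Y →ₗ[ℂ] Y)) = LinearMap.ker ((((A ∘L C - 1) ^ (n + 1) : Y →L[ℂ] Y) : Y →ₗ[ℂ] Y))) ↔
      (∃ n : ℕ, LinearMap.ker ((((B ∘L A - 1) ^ n : X →L[ℂ] X) : X →ₗ[ℂ] X)) = LinearMap.ker ((((B ∘L A - 1) ^ (n + 1) : X →L[ℂ] X) : X →ₗ[ℂ] X)))) ∧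
    ((∃ n : ℕ, LinearMap.ker ((((A ∘L C - 1) ^ n : Y →L[ℂ] Y) : Y →ₗ[ℂ] Y)) = LinearMap.ker ((((A ∘L C - 1) ^ (n + 1) : Y →L[ℂ] Y) : Y →ₗ[ℂ] Y))) →
      sInf {n : ℕ | LinearMap.ker ((((A ∘L C - 1) ^ n : Y →L[ℂ] Y) : Y →ₗ[ℂ] Y)) = LinearMap.ker ((((A ∘L C - 1) ^ (n + 1) : Y →L[ℂ] Y) : Y →ₗ[ℂ] Y))} =
        sInf {n : ℕ | LinearMap.ker ((((B ∘L A - 1) ^ n : X →L[ℂ] X) : X →ₗ[ℂ] X)) = LinearMap.ker ((((B ∘L A - 1) ^ (n + 1) : X →L[ℂ] X) : X →ₗ[ℂ] X))}) := by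
  have key : ∀ n : ℕ,
      (LinearMap.ker ((((A ∘L C - 1) ^ n : Y →L[ℂ] Y) : Y →ₗ[ℂ] Y)) = LinearMap.ker ((((A ∘L C - 1) ^ (n + 1) : Y →L[ℂ] Y) : Y →ₗ[ℂ] Y))) ↔
      (LinearMap.ker ((((B ∘L A - 1) ^ n : X →L[ℂ] X) : X →ₗ[ℂ] X)) = LinearMap.ker ((((B ∘L A - 1) ^ (n + 1) : X →L[ℂ] X) : X →ₗ[ℂ] X))) := by
    intro n
    constructor
    · exact core A B C h1 h2 h3 n
    · intro h
      have hab := jacobson_ker B A n h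
      have hca := core A C B h3.symm h2.symm h1.symm n hab
      exact jacobson_ker C A n hca
  constructor
  · exact ⟨fun ⟨n, h⟩ => ⟨n, (key n).1 h⟩, fun ⟨n, h⟩ => ⟨n, (key n).2 h⟩⟩
  · intro _
    congr 1
    exact Set.ext fun n => key n
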